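/- Let (A, <, c) be a Φ-structure and let (a_l)_{l ∈ ℤ} be a quasi-chain in A such that a_0 < a_2. Then for all integers l, m with l + 2 ≤ m one has a_l < a_m. -/

import Mathlib

/-- A Φ-structure: an irreflexive transitive relation `lt` and a colouring
`c : A → ZMod 5` such that distinct elements of the same colour are comparable,
elements whose colours differ by 2 or 3 are comparable, and every element has a
right-witness and a left-witness (incomparable, colour plus/minus one). -/
def IsPhiStructure {A : Type*} (lt : A → A → Prop) (c : A → ZMod 5) : Prop :=
  (∀ x, ¬ lt x x) ∧
  (∀ x y z, lt x y → lt y z → lt x z) ∧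
  (∀ x y, x ≠ y → c x = c y → lt x y ∨ lt y x) ∧
  (∀ x y, (c y = c x + 2 ∨ c y = c x + 3) → lt x y ∨ lt y x) ∧
  (∀ x, ∃ y, c y = c x + 1 ∧ x ≠ y ∧ ¬ lt x y ∧ ¬ lt y x) ∧
  (∀ x, ∃ y, c y = c x - 1 ∧ x ≠ y ∧ ¬ lt x y ∧ ¬ lt y x)

/-- A quasi-chain: a ℤ-indexed sequence where each `a (l+1)` is a right-witness
of `a l`. -/
def IsQuasiChain {A : Type*} (lt : A → A → Prop) (c : A → ZMod 5) (a : ℤ → A) : Prop :=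
  ∀ l : ℤ, c (a (l + 1)) = c (a l) + 1 ∧ a l ≠ a (l + 1) ∧
    ¬ lt (a l) (a (l + 1)) ∧ ¬ lt (a (l + 1)) (a l)

/-- In a Φ-structure, a quasi-chain with `a 0 < a 2` satisfies
`a l < a m` whenever `l + 2 ≤ m`. -/
theorem quasiChain_lt {A : Type*} (lt : A → A → Prop) (c : A → ZMod 5)
    (hPhi : IsPhiStructure lt c) (a : ℤ → A) (hqc : IsQuasiChain lt c a)
    (h02 : lt (a 0) (a 2)) :
    ∀ l m : ℤ, l + 2 ≤ m → lt (a l) (a m) := by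
  obtain ⟨hirr, htrans, hsame, hdiff, -, -⟩ := hPhi
  have hcol : ∀ l : ℤ, c (a (l+1)) = c (a l) + 1 := fun l => (hqc l).1
  have hinc : ∀ l : ℤ, ¬ lt (a l) (a (l+1)) ∧ ¬ lt (a (l+1)) (a l) :=
    fun l => ⟨(hqc l).2.2.1, (hqc l).2.2.2⟩
  have hc2 : ∀ l : ℤ, c (a (l+2)) = c (a l) + 2 := by
    intro l
    have h2 := hcol (l+1)
    rw [show l+1+1 = l+2 by ring] at h2
    rw [h2, hcol l]; ring
  have hc3 : ∀ l : ℤ, c (a (l+3)) = c (a l) + 3 := by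
    intro l
    have h1 := hcol (l+2)
    rw [show l+2+1 = l+3 by ring] at h1
    rw [h1, hc2 l]; ring
  have hcomp2 : ∀ l : ℤ, lt (a l) (a (l+2)) ∨ lt (a (l+2)) (a l) :=
    fun l => hdiff _ _ (Or.inl (hc2 l))
  have hcomp3 : ∀ l : ℤ, lt (a l) (a (l+3)) ∨ lt (a (l+3)) (a l) :=
    fun l => hdiff _ _ (Or.inr (hc3 l))
  have stepF : ∀ l : ℤ, lt (a l) (a (l+2)) → lt (a (l+1)) (a (l+1+2)) := by
    intro l h
    rw [show l+1+2 = l+3 by ring]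
    rcases hcomp2 (l+1) with h1 | h1
    · rwa [show l+1+2 = l+3 by ring] at h1
    · rw [show l+1+2 = l+3 by ring] at h1
      exfalso
      rcases hcomp3 l with h2 | h2
      · exact (hinc l).1 (htrans _ _ _ h2 h1)
      · exact (hinc (l+2)).2 (show lt (a (l+2+1)) (a (l+2)) by
          rw [show l+2+1 = l+3 by ring]; exact htrans _ _ _ h2 h)
  have stepB : ∀ l : ℤ, lt (a l) (a (l+2)) → lt (a (l-1)) (a (l-1+2)) := by
    intro l h
    rw [show l-1+2 = l+1 by ring]
    rcases hcomp2 (l-1) with h1 | h1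
    · rwa [show l-1+2 = l+1 by ring] at h1
    · rw [show l-1+2 = l+1 by ring] at h1
      exfalso
      rcases hcomp3 (l-1) with h2 | h2
      · rw [show l-1+3 = l+2 by ring] at h2
        exact (hinc (l+1)).1 (show lt (a (l+1)) (a (l+1+1)) by
          rw [show l+1+1 = l+2 by ring]; exact htrans _ _ _ h1 h2)
      · rw [show l-1+3 = l+2 by ring] at h2
        exact (hinc (l-1)).2 (show lt (a (l-1+1)) (a (l-1)) by
          rw [show l-1+1 = l by ring]; exact htrans _ _ _ h h2)
  have all2 : ∀ l : ℤ, lt (a l) (a (l+2)) := by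
    intro l
    induction l using Int.induction_on with
    | zero => exact h02
    | succ k ih => exact stepF k ih
    | pred k ih => exact stepB (-k) ih
  have all3 : ∀ l : ℤ, lt (a l) (a (l+3)) := by
    intro l
    rcases hcomp3 l with h1 | h1
    · exact h1
    · exfalso
      have h2 := all2 (l+1)
      rw [show l+1+2 = l+3 by ring] at h2
      exact (hinc l).2 (htrans _ _ _ h2 h1)
  have key : ∀ n : ℕ, ∀ l : ℤ, lt (a l) (a (l + 2 + n)) := by
    intro n
    induction n using Nat.strong_induction_on with
    | _ n ih =>
      intro l
      match n with
      | 0 => simpa using all2 l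
      | 1 => rw [show l + 2 + (1:ℕ) = l + 3 by push_cast; ring]; exact all3 l
      | (k+2) =>
        have h1 := all2 l
        have h2 := ih k (by omega) (l+2)
        rw [show l + 2 + 2 + (k:ℕ) = l + 2 + ((k:ℕ)+2 : ℕ) by push_cast; ring] at h2
        exact htrans _ _ _ h1 h2
  intro l m hlm
  have hm : m = l + 2 + ((m - l - 2).toNat : ℤ) := by omega
  rw [hm]
  exact key _ l
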